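/- Fix N ∈ ℕ, α > 0, r > 0, and T > 0. Suppose u ∈ C¹([0,T]; E_N) satisfies, for all t ∈ [0,T], the Galerkin fractional Euler–Voigt system (I + α^{2r} A^r) u'(t) = − P_N P_σ((u(t)·∇)u(t)). Then the quantity ‖u(t)‖_{L²}² + α^{2r} ‖A^{r/2} u(t)‖_{L²}² is constant in t; that is, for all t ∈ [0,T], ‖u(t)‖_{L²}² + α^{2r} ‖A^{r/2} u(t)‖_{L²}² = ‖u(0)‖_{L²}² + α^{2r} ‖A^{r/2} u(0)‖_{L²}². -/

import Mathlib

noncomputable section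

/-- Fourier coefficient families for trigonometric polynomials on `T³ = ℝ³/ℤ³`:
`c k ∈ ℂ³` is the coefficient of `e^{2πi k·x}`. -/
abbrev Coeffs := (Fin 3 → ℤ) → Fin 3 → ℂ

/-- `|k|² = ∑ i, kᵢ²`. -/
def ksq (k : Fin 3 → ℤ) : ℤ := ∑ i, (k i) ^ 2

/-- The eigenvalue `|2πk|²` of `A` at wavenumber `k`. -/
def mu (k : Fin 3 → ℤ) : ℝ := (2 * Real.pi) ^ 2 * (ksq k : ℝ)

/-- Membership in the Galerkin space `E_N`: real-valued (conjugate symmetric),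
divergence-free (`k·ĉ_k = 0`), mean-free and supported on `0 < |k| ≤ N`. -/
def memEN (N : ℕ) (c : Coeffs) : Prop :=
  (∀ k j, c (-k) j = starRingEnd ℂ (c k j)) ∧
  (∀ k, ∑ i, (k i : ℂ) * c k i = 0) ∧
  (∀ k, (k = 0 ∨ ((N : ℤ) ^ 2 < ksq k)) → c k = 0)

/-- The lattice box `{k : |kᵢ| ≤ N for each i}`, containing all active modes. -/
def box (N : ℕ) : Finset (Fin 3 → ℤ) :=
  Finset.Icc (fun _ => -(N : ℤ)) (fun _ => (N : ℤ))

/-- The `k`-th Fourier coefficient of the nonlinearity `(u·∇)u` for `u ∈ E_N` with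
coefficients `c`:  `∑_{m+n=k} (2πi ∑ᵢ (c m)ᵢ nᵢ) (c n)ⱼ`. -/
def nonlinCoeff (N : ℕ) (c : Coeffs) (k : Fin 3 → ℤ) : Fin 3 → ℂ :=
  fun j => ∑ n ∈ box N, (2 * Real.pi * Complex.I * ∑ i, c (k - n) i * (n i : ℂ)) * c n j

/-- Orthogonal projection of `v ∈ ℂ³` onto the plane orthogonal to `k`. -/
def projPerp (k : Fin 3 → ℤ) (v : Fin 3 → ℂ) : Fin 3 → ℂ :=
  fun j => v j - ((∑ i, (k i : ℂ) * v i) / (ksq k : ℂ)) * (k j : ℂ)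

/-- The coefficients of `P_N P_σ((u·∇)u)` for `u ∈ E_N` with coefficients `c`. -/
def BN (N : ℕ) (c : Coeffs) (k : Fin 3 → ℤ) : Fin 3 → ℂ :=
  if k ≠ 0 ∧ ksq k ≤ (N : ℤ) ^ 2 then projPerp k (nonlinCoeff N c k) else 0

/-- `‖u‖_{L²}² = ∑_{0<|k|≤N} |ĉ_k|²` (Parseval). -/
def l2sq (N : ℕ) (c : Coeffs) : ℝ :=
  ∑ k ∈ box N, ∑ j, Complex.normSq (c k j)

/-- `‖A^{r/2}u‖_{L²}² = ∑_{0<|k|≤N} |2πk|^{2r} |ĉ_k|²`. -/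
def arsq (N : ℕ) (r : ℝ) (c : Coeffs) : ℝ :=
  ∑ k ∈ box N, mu k ^ r * ∑ j, Complex.normSq (c k j)

end

section EnergyAux

open Finset in
private lemma mem_box_iff {N : ℕ} {k : Fin 3 → ℤ} :
    k ∈ box N ↔ ∀ i, -(N : ℤ) ≤ k i ∧ k i ≤ (N : ℤ) := by
  simp [_root_.box, Finset.mem_Icc, Pi.le_def, forall_and]

private lemma c_zero_of_not_mem_box {N : ℕ} {c : Coeffs} (hc : memEN N c)
    {k : Fin 3 → ℤ} (hk : k ∉ box N) : c k = 0 := by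
  apply hc.2.2
  right
  simp only [mem_box_iff, not_forall, not_and_or, not_le] at hk
  obtain ⟨i, hi⟩ := hk
  have h1 : (N : ℤ) ^ 2 < (k i) ^ 2 := by rcases hi with h | h <;> nlinarith
  have h2 : (k i) ^ 2 ≤ ksq k :=
    Finset.single_le_sum (f := fun j => (k j) ^ 2) (fun j _ => sq_nonneg (k j))
      (Finset.mem_univ i)
  omega

private lemma conj_div {N : ℕ} {c : Coeffs} (hc : memEN N c) (k : Fin 3 → ℤ) :
    ∑ i, (k i : ℂ) * (starRingEnd ℂ) (c k i) = 0 := by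
  have := congrArg (starRingEnd ℂ) (hc.2.1 k)
  simpa [map_sum, map_mul, map_intCast] using this

/-- The summand of the trilinear form in convolution variables. -/
private noncomputable def Gd (c : Coeffs) (m n : Fin 3 → ℤ) : ℂ :=
  (2 * Real.pi * Complex.I * ∑ i, c m i * (n i : ℂ)) *
    (∑ j, (starRingEnd ℂ) (c (m + n) j) * c n j)

private lemma box_subset {N : ℕ} : box N ⊆ box (2 * N) := by
  intro k hk
  rw [mem_box_iff] at *
  intro i
  have := hk i
  push_cast
  omega

private lemma key_orth (N : ℕ) (c : Coeffs) (hc : memEN N c) :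
    ∑ k ∈ box N, ∑ j, (starRingEnd ℂ) (c k j) * BN N c k j = 0 := by
  classical
  have hGm : ∀ m n, m ∉ box N → Gd c m n = 0 := by
    intro m n hm
    have h0 : c m = 0 := c_zero_of_not_mem_box hc hm
    simp [Gd, h0]
  have hGn : ∀ m n, n ∉ box N → Gd c m n = 0 := by
    intro m n hn
    have h0 : c n = 0 := c_zero_of_not_mem_box hc hn
    simp [Gd, h0]
  have hGmn : ∀ m n, m + n ∉ box N → Gd c m n = 0 := by
    intro m n h
    have h0 : c (m + n) = 0 := c_zero_of_not_mem_box hc h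
    simp [Gd, h0]
  -- Step 1: projection is invisible to c k
  have step1 : ∀ k, (∑ j, (starRingEnd ℂ) (c k j) * BN N c k j)
      = ∑ j, (starRingEnd ℂ) (c k j) * nonlinCoeff N c k j := by
    intro k
    unfold BN
    split_ifs with h
    · unfold projPerp
      simp only [mul_sub]
      rw [Finset.sum_sub_distrib]
      have hd : ∑ j, (starRingEnd ℂ) (c k j) * (k j : ℂ) = 0 := by
        rw [← conj_div hc k]
        exact Finset.sum_congr rfl fun j _ => mul_comm _ _
      have hfac : ∑ j, (starRingEnd ℂ) (c k j) *
          ((∑ i, (k i : ℂ) * nonlinCoeff N c k i) / (ksq k : ℂ) * (k j : ℂ))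
          = (∑ i, (k i : ℂ) * nonlinCoeff N c k i) / (ksq k : ℂ)
            * ∑ j, (starRingEnd ℂ) (c k j) * (k j : ℂ) := by
        rw [Finset.mul_sum]
        exact Finset.sum_congr rfl fun j _ => by ring
      rw [hfac, hd, mul_zero, sub_zero]
    · have hck : c k = 0 := by
        rcases eq_or_ne k 0 with h0 | h0
        · exact hc.2.2 k (Or.inl h0)
        · push_neg at h
          exact hc.2.2 k (Or.inr (h h0))
      simp [hck]
  -- Step 2: double-sum form
  have step2 : ∀ k, (∑ j, (starRingEnd ℂ) (c k j) * nonlinCoeff N c k j)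
      = ∑ n ∈ box N, Gd c (k - n) n := by
    intro k
    have hswap : ∀ j, (starRingEnd ℂ) (c k j) * nonlinCoeff N c k j
        = ∑ n ∈ box N, (2 * Real.pi * Complex.I * ∑ i, c (k - n) i * (n i : ℂ))
            * ((starRingEnd ℂ) (c k j) * c n j) := by
      intro j
      unfold nonlinCoeff
      rw [Finset.mul_sum]
      exact Finset.sum_congr rfl fun n _ => by ring
    rw [Finset.sum_congr rfl fun j _ => hswap j, Finset.sum_comm]
    refine Finset.sum_congr rfl fun n _ => ?_
    have hk : k - n + n = k := by ring
    unfold Gd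
    rw [hk]
    exact (Finset.mul_sum _ _ _).symm
  -- Step 3: reindex k ↦ k - n
  have step3 : ∀ n ∈ box N, ∑ k ∈ box N, Gd c (k - n) n
      = ∑ m ∈ box (2 * N), Gd c m n := by
    intro n hn
    have hinj : ∀ a ∈ box N, ∀ b ∈ box N, a - n = b - n → a = b := by
      intro a _ b _ hab
      have := congrArg (· + n) hab
      simpa using this
    rw [← Finset.sum_image (g := fun k => k - n) (f := fun m => Gd c m n) hinj]
    apply Finset.sum_subset
    · intro m hm
      rw [Finset.mem_image] at hm
      obtain ⟨k, hk, rfl⟩ := hm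
      rw [mem_box_iff] at *
      intro i
      have h1 := hk i
      have h2 := hn i
      simp only [Pi.sub_apply]
      push_cast
      omega
    · intro m _ hnot
      apply hGmn
      intro hmem
      exact hnot (Finset.mem_image.mpr ⟨m + n, hmem, by ring⟩)
  -- Step 4: the flip n ↦ -m-n negates the summand
  have hflip : ∀ m n, Gd c m (-m - n) = -Gd c m n := by
    intro m n
    unfold Gd
    have e1 : m + (-m - n) = -n := by ring
    rw [e1]
    have h1 : (∑ i, c m i * (((-m - n) i : ℤ) : ℂ)) = -∑ i, c m i * ((n i : ℤ) : ℂ) := by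
      have hm0 : ∑ i, c m i * ((m i : ℤ) : ℂ) = 0 := by
        rw [← hc.2.1 m]
        exact Finset.sum_congr rfl fun i _ => mul_comm _ _
      have hterm : ∀ i, c m i * (((-m - n) i : ℤ) : ℂ)
          = -(c m i * ((m i : ℤ) : ℂ)) - c m i * ((n i : ℤ) : ℂ) := by
        intro i
        simp only [Pi.sub_apply, Pi.neg_apply]
        push_cast
        ring
      rw [Finset.sum_congr rfl fun i _ => hterm i, Finset.sum_sub_distrib,
        Finset.sum_neg_distrib, hm0]
      ring
    have h2 : (∑ j, (starRingEnd ℂ) (c (-n) j) * c (-m - n) j)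
        = ∑ j, (starRingEnd ℂ) (c (m + n) j) * c n j := by
      have e2 : -m - n = -(m + n) := by ring
      rw [e2]
      refine Finset.sum_congr rfl fun j _ => ?_
      rw [hc.1 n j, hc.1 (m + n) j]
      rw [Complex.conj_conj]
      ring
    rw [h1, h2]
    ring
  -- Step 5: per m in box N, the inner sum over box 2N vanishes
  have step5 : ∀ m ∈ box N, ∑ n ∈ box (2 * N), Gd c m n = 0 := by
    intro m hm
    have hinj2 : ∀ a ∈ box (2 * N), ∀ b ∈ box (2 * N), -m - a = -m - b → a = b := by
      intro a _ b _ hab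
      have : -(-m - a) - m = -(-m - b) - m := by rw [hab]
      simpa using this
    have himg : ∑ n ∈ box (2 * N), Gd c m (-m - n) = ∑ n ∈ box (2 * N), Gd c m n := by
      rw [← Finset.sum_image (g := fun n => -m - n) (f := fun x => Gd c m x) hinj2]
      have h1 : ∑ x ∈ (box (2 * N)).image (fun n => -m - n), Gd c m x
          = ∑ x ∈ box N, Gd c m x := by
        symm
        apply Finset.sum_subset
        · intro x hx
          refine Finset.mem_image.mpr ⟨-m - x, ?_, by ring⟩
          rw [mem_box_iff] at *
          intro i
          have := hx i
          have := hm i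
          simp only [Pi.sub_apply, Pi.neg_apply]
          push_cast
          omega
        · intro x _ hx
          exact hGn m x hx
      have h2 : ∑ n ∈ box (2 * N), Gd c m n = ∑ n ∈ box N, Gd c m n := by
        symm
        exact Finset.sum_subset box_subset fun n _ hn => hGn m n hn
      rw [h1, h2]
    have hneg : ∑ n ∈ box (2 * N), Gd c m (-m - n)
        = -∑ n ∈ box (2 * N), Gd c m n := by
      rw [← Finset.sum_neg_distrib]
      exact Finset.sum_congr rfl fun n _ => hflip m n
    have hS : ∑ n ∈ box (2 * N), Gd c m n = -∑ n ∈ box (2 * N), Gd c m n :=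
      himg.symm.trans hneg
    linear_combination hS / 2
  -- Combine everything
  calc ∑ k ∈ box N, ∑ j, (starRingEnd ℂ) (c k j) * BN N c k j
      = ∑ k ∈ box N, ∑ n ∈ box N, Gd c (k - n) n := by
        exact Finset.sum_congr rfl fun k _ => (step1 k).trans (step2 k)
    _ = ∑ n ∈ box N, ∑ k ∈ box N, Gd c (k - n) n := Finset.sum_comm
    _ = ∑ n ∈ box N, ∑ m ∈ box (2 * N), Gd c m n :=
        Finset.sum_congr rfl step3
    _ = ∑ m ∈ box (2 * N), ∑ n ∈ box N, Gd c m n := Finset.sum_comm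
    _ = ∑ m ∈ box N, ∑ n ∈ box N, Gd c m n := by
        symm
        exact Finset.sum_subset box_subset fun m _ hm =>
          Finset.sum_eq_zero fun n _ => hGm m n hm
    _ = ∑ m ∈ box N, ∑ n ∈ box (2 * N), Gd c m n :=
        Finset.sum_congr rfl fun m _ =>
          Finset.sum_subset box_subset fun n _ hn => hGn m n hn
    _ = 0 := Finset.sum_eq_zero step5

private lemma hasDerivWithinAt_normSq {f : ℝ → ℂ} {f' : ℂ} {s : Set ℝ} {t : ℝ}
    (hf : HasDerivWithinAt f f' s t) :
    HasDerivWithinAt (fun x => Complex.normSq (f x))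
      (2 * ((starRingEnd ℂ) (f t) * f').re) s t := by
  have hre : HasDerivWithinAt (fun x => (f x).re) f'.re s t := by
    exact Complex.reCLM.hasFDerivAt.comp_hasDerivWithinAt t hf
  have him : HasDerivWithinAt (fun x => (f x).im) f'.im s t := by
    exact Complex.imCLM.hasFDerivAt.comp_hasDerivWithinAt t hf
  have h := (hre.mul hre).add (him.mul him)
  have heqf : (fun x => Complex.normSq (f x))
      = fun x => (f x).re * (f x).re + (f x).im * (f x).im := by
    funext x
    exact Complex.normSq_apply _
  rw [heqf]
  refine h.congr_deriv ?_
  simp only [Complex.mul_re, Complex.conj_re, Complex.conj_im]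
  ring

end EnergyAux

/-- Energy conservation for the Galerkin fractional Euler–Voigt system:
if `u ∈ C¹([0,T]; E_N)` (represented by its coefficient family `c`, with derivative `d`)
solves `(I + α^{2r}A^r) u' = -P_N P_σ((u·∇)u)`, then
`‖u(t)‖_{L²}² + α^{2r}‖A^{r/2}u(t)‖_{L²}²` is constant on `[0,T]`. -/
theorem galerkin_fEV_energy_conservation
    (N : ℕ) (α r T : ℝ) (hα : 0 < α) (hr : 0 < r) (hT : 0 < T)
    (c d : ℝ → Coeffs)
    (hmem : ∀ t ∈ Set.Icc (0 : ℝ) T, memEN N (c t))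
    (hderiv : ∀ t ∈ Set.Icc (0 : ℝ) T, ∀ k j,
      HasDerivWithinAt (fun s => c s k j) (d t k j) (Set.Icc (0 : ℝ) T) t)
    (hC1 : ∀ k j, ContinuousOn (fun s => d s k j) (Set.Icc (0 : ℝ) T))
    (heq : ∀ t ∈ Set.Icc (0 : ℝ) T, ∀ k j,
      ((1 + α ^ (2 * r) * mu k ^ r : ℝ) : ℂ) * d t k j = - BN N (c t) k j) :
    ∀ t ∈ Set.Icc (0 : ℝ) T,
      l2sq N (c t) + α ^ (2 * r) * arsq N r (c t)
        = l2sq N (c 0) + α ^ (2 * r) * arsq N r (c 0) := by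
  have hIcc : ∀ x ∈ Set.Icc (0 : ℝ) T,
      HasDerivWithinAt (fun s => l2sq N (c s) + α ^ (2 * r) * arsq N r (c s))
        ((∑ k ∈ box N, ∑ j, 2 * ((starRingEnd ℂ) (c x k j) * d x k j).re)
          + α ^ (2 * r) * ∑ k ∈ box N, mu k ^ r *
              ∑ j, 2 * ((starRingEnd ℂ) (c x k j) * d x k j).re)
        (Set.Icc (0 : ℝ) T) x := by
    intro x hx
    apply HasDerivWithinAt.add
    · exact HasDerivWithinAt.fun_sum fun k _ => HasDerivWithinAt.fun_sum fun j _ =>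
        hasDerivWithinAt_normSq (hderiv x hx k j)
    · exact (HasDerivWithinAt.fun_sum fun k _ =>
        (HasDerivWithinAt.fun_sum fun j _ =>
          hasDerivWithinAt_normSq (hderiv x hx k j)).const_mul (mu k ^ r)).const_mul
        (α ^ (2 * r))
  have hzero : ∀ x ∈ Set.Icc (0 : ℝ) T,
      ((∑ k ∈ box N, ∑ j, 2 * ((starRingEnd ℂ) (c x k j) * d x k j).re)
        + α ^ (2 * r) * ∑ k ∈ box N, mu k ^ r *
            ∑ j, 2 * ((starRingEnd ℂ) (c x k j) * d x k j).re) = 0 := by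
    intro x hx
    have hkey := key_orth N (c x) (hmem x hx)
    have hstep : ∀ k, (1 + α ^ (2 * r) * mu k ^ r) *
        ∑ j, 2 * ((starRingEnd ℂ) (c x k j) * d x k j).re
        = ∑ j, 2 * (-((starRingEnd ℂ) (c x k j) * BN N (c x) k j)).re := by
      intro k
      rw [Finset.mul_sum]
      refine Finset.sum_congr rfl fun j _ => ?_
      have h1 : (starRingEnd ℂ) (c x k j) *
          (((1 + α ^ (2 * r) * mu k ^ r : ℝ) : ℂ) * d x k j)
          = ((1 + α ^ (2 * r) * mu k ^ r : ℝ) : ℂ) *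
              ((starRingEnd ℂ) (c x k j) * d x k j) := by ring
      have h2 := heq x hx k j
      calc (1 + α ^ (2 * r) * mu k ^ r) * (2 * ((starRingEnd ℂ) (c x k j) * d x k j).re)
          = 2 * ((((1 + α ^ (2 * r) * mu k ^ r : ℝ) : ℂ)) *
              ((starRingEnd ℂ) (c x k j) * d x k j)).re := by
            rw [Complex.re_ofReal_mul]; ring
        _ = 2 * ((starRingEnd ℂ) (c x k j) *
              (((1 + α ^ (2 * r) * mu k ^ r : ℝ) : ℂ) * d x k j)).re := by rw [h1]
        _ = 2 * ((starRingEnd ℂ) (c x k j) * (- BN N (c x) k j)).re := by rw [h2]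
        _ = 2 * (-((starRingEnd ℂ) (c x k j) * BN N (c x) k j)).re := by rw [mul_neg]
    calc (∑ k ∈ box N, ∑ j, 2 * ((starRingEnd ℂ) (c x k j) * d x k j).re)
          + α ^ (2 * r) * ∑ k ∈ box N, mu k ^ r *
              ∑ j, 2 * ((starRingEnd ℂ) (c x k j) * d x k j).re
        = ∑ k ∈ box N, (1 + α ^ (2 * r) * mu k ^ r) *
            ∑ j, 2 * ((starRingEnd ℂ) (c x k j) * d x k j).re := by
          rw [Finset.mul_sum, ← Finset.sum_add_distrib]
          exact Finset.sum_congr rfl fun k _ => by ring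
      _ = ∑ k ∈ box N, ∑ j, 2 * (-((starRingEnd ℂ) (c x k j) * BN N (c x) k j)).re :=
          Finset.sum_congr rfl fun k _ => hstep k
      _ = 2 * (∑ k ∈ box N, ∑ j, -((starRingEnd ℂ) (c x k j) * BN N (c x) k j)).re := by
          rw [Complex.re_sum, Finset.mul_sum]
          exact Finset.sum_congr rfl fun k _ => by
            rw [Complex.re_sum, Finset.mul_sum]
      _ = 0 := by
          simp only [Finset.sum_neg_distrib, hkey, neg_zero, Complex.zero_re, mul_zero]
  intro t ht
  have h0T : (0 : ℝ) ∈ Set.Icc (0 : ℝ) T := Set.mem_Icc.mpr ⟨le_refl 0, hT.le⟩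
  have hbound := (convex_Icc (0 : ℝ) T).norm_image_sub_le_of_norm_hasDerivWithin_le
    (f' := fun _ => (0 : ℝ)) (C := 0)
    (fun x hx => hzero x hx ▸ hIcc x hx)
    (fun x hx => by simp) h0T ht
  simp only [zero_mul, norm_le_zero_iff, sub_eq_zero] at hbound
  exact hbound
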